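/- Along any sequence {x^k} generated by the algorithm, the function values are nonincreasing: f(x^k) ≤ f(x^{k−1}) for every k ≥ 1 (indeed f(x^{k,i}) ≤ f(x^{k,i−1}) for every k ≥ 1 and every i ∈ {1,…,n}). -/

import Mathlib

open Finset Filter

noncomputable def obj {d n : ℕ} {J : Type*} (a : J → EuclideanSpace ℝ (Fin d))
    (A : Fin n → Finset J) (dhat : Fin n → J → ℝ)
    (B : Fin n → Finset (Fin n)) (lhat : Fin n → Fin n → ℝ)
    (x : Fin n → EuclideanSpace ℝ (Fin d)) : ℝ :=
  (∑ i, ∑ j ∈ A i, max (‖x i - a j‖ - dhat i j) 0 ^ 2)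
    + (1 / 2) * ∑ i, ∑ q ∈ B i, max (‖x i - x q‖ - lhat i q) 0 ^ 2

noncomputable def projBall {d : ℕ} (a : EuclideanSpace ℝ (Fin d)) (r : ℝ)
    (z : EuclideanSpace ℝ (Fin d)) : EuclideanSpace ℝ (Fin d) :=
  if ‖z - a‖ ≤ r then z else a + (r / ‖z - a‖) • (z - a)

/-- The Coop. PPM algorithm: `X (k+1)` is obtained from `X k` by updating the
blocks successively for `i = 1, …, n`. -/
def IsPPM {d n : ℕ} {J : Type*} (a : J → EuclideanSpace ℝ (Fin d))
    (A : Fin n → Finset J) (dhat : Fin n → J → ℝ)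
    (B : Fin n → Finset (Fin n)) (lhat : Fin n → Fin n → ℝ)
    (X : ℕ → Fin n → EuclideanSpace ℝ (Fin d)) : Prop :=
  ∀ (k : ℕ) (i : Fin n),
    X (k + 1) i = (1 / 2 : ℝ) • X k i
      + (1 / (2 * (((A i).card : ℝ) + ((B i).card : ℝ)))) •
        ((∑ j ∈ A i, projBall (a j) (dhat i j) (X k i))
          + ∑ q ∈ B i, projBall (if q < i then X (k + 1) q else X k q) (lhat i q) (X k i))

/-- The intermediate configuration `x^{k+1, m}`: the first `m` blocks are those of
`X (k+1)` and the remaining blocks are those of `X k`. -/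
def interm {d n : ℕ} (X : ℕ → Fin n → EuclideanSpace ℝ (Fin d)) (k m : ℕ) :
    Fin n → EuclideanSpace ℝ (Fin d) :=
  fun t => if (t : ℕ) < m then X (k + 1) t else X k t

/-! ### Auxiliary lemmas -/

/-- The penalty term `(max (‖z - a‖ - r) 0)^2`, i.e. the squared distance of `z`
to the closed ball `B(a, r)`. -/
noncomputable def pen {d : ℕ} (a : EuclideanSpace ℝ (Fin d)) (r : ℝ)
    (z : EuclideanSpace ℝ (Fin d)) : ℝ := max (‖z - a‖ - r) 0 ^ 2

lemma projBall_mem {d : ℕ} (a : EuclideanSpace ℝ (Fin d)) {r : ℝ} (hr : 0 ≤ r)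
    (z : EuclideanSpace ℝ (Fin d)) : ‖projBall a r z - a‖ ≤ r := by
  unfold projBall
  split_ifs with h
  · exact h
  · push_neg at h
    have hN : 0 < ‖z - a‖ := lt_of_le_of_lt hr h
    rw [add_sub_cancel_left, norm_smul, Real.norm_eq_abs,
      abs_of_nonneg (div_nonneg hr hN.le), div_mul_cancel₀ _ hN.ne']

lemma norm_sub_projBall {d : ℕ} (a : EuclideanSpace ℝ (Fin d)) {r : ℝ} (hr : 0 ≤ r)
    (z : EuclideanSpace ℝ (Fin d)) : ‖z - projBall a r z‖ = max (‖z - a‖ - r) 0 := by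
  unfold projBall
  split_ifs with h
  · simp [max_eq_right (by linarith : ‖z - a‖ - r ≤ 0)]
  · push_neg at h
    have hN : 0 < ‖z - a‖ := lt_of_le_of_lt hr h
    have he : z - (a + (r / ‖z - a‖) • (z - a)) = (1 - r / ‖z - a‖) • (z - a) := by
      rw [sub_smul, one_smul]; abel
    have hc : 0 ≤ 1 - r / ‖z - a‖ := by
      have := (div_lt_one hN).mpr h; linarith
    rw [he, norm_smul, Real.norm_eq_abs, abs_of_nonneg hc, sub_mul, one_mul,
      div_mul_cancel₀ _ hN.ne', max_eq_left (by linarith)]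

lemma pen_le {d : ℕ} (a : EuclideanSpace ℝ (Fin d)) {r : ℝ} (hr : 0 ≤ r)
    (x y : EuclideanSpace ℝ (Fin d)) :
    pen a r y ≤ pen a r x + 2 * inner ℝ (x - projBall a r x) (y - x) + ‖y - x‖ ^ 2 := by
  have htri : ‖y - a‖ ≤ ‖y - projBall a r x‖ + ‖projBall a r x - a‖ := by
    have := dist_triangle y (projBall a r x) a
    simpa [dist_eq_norm] using this
  have h1 : max (‖y - a‖ - r) 0 ≤ ‖y - projBall a r x‖ := by
    apply max_le _ (norm_nonneg _)
    have := projBall_mem a hr x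
    linarith
  have h2 : pen a r y ≤ ‖y - projBall a r x‖ ^ 2 :=
    pow_le_pow_left₀ (le_max_right _ _) h1 2
  have h3 : y - projBall a r x = (x - projBall a r x) + (y - x) := by abel
  calc pen a r y ≤ ‖y - projBall a r x‖ ^ 2 := h2
    _ = pen a r x + 2 * inner ℝ (x - projBall a r x) (y - x) + ‖y - x‖ ^ 2 := by
        rw [h3, norm_add_sq_real, norm_sub_projBall a hr x]; rfl

lemma core {d : ℕ} {ι : Type*} (s : Finset ι) (hs : s.Nonempty)
    (c : ι → EuclideanSpace ℝ (Fin d)) (r : ι → ℝ) (hr : ∀ t ∈ s, 0 ≤ r t)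
    (x y : EuclideanSpace ℝ (Fin d))
    (hy : y = (1/2 : ℝ) • x + (1/(2 * (s.card : ℝ))) • ∑ t ∈ s, projBall (c t) (r t) x) :
    ∑ t ∈ s, pen (c t) (r t) y ≤ ∑ t ∈ s, pen (c t) (r t) x := by
  have hm : (0:ℝ) < (s.card : ℝ) := by exact_mod_cast Finset.card_pos.mpr hs
  set m : ℝ := (s.card : ℝ) with hmdef
  set g : EuclideanSpace ℝ (Fin d) := ∑ t ∈ s, (x - projBall (c t) (r t) x) with hg
  have hsum : g = m • x - ∑ t ∈ s, projBall (c t) (r t) x := by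
    rw [hg, Finset.sum_sub_distrib, Finset.sum_const, hmdef, Nat.cast_smul_eq_nsmul]
  have hyx : y - x = -(1/(2*m)) • g := by
    have h2 : (1/(2*m)) * m = 1/2 := by field_simp
    rw [hy, hsum, neg_smul, smul_sub, smul_smul, h2]
    module
  have h1 : ∑ t ∈ s, pen (c t) (r t) y
      ≤ ∑ t ∈ s, (pen (c t) (r t) x + 2 * inner ℝ (x - projBall (c t) (r t) x) (y - x) + ‖y - x‖ ^ 2) :=
    Finset.sum_le_sum fun t ht => pen_le (c t) (hr t ht) x y
  have e1 : ∑ t ∈ s, (2 : ℝ) * inner ℝ (x - projBall (c t) (r t) x) (y - x)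
      = 2 * inner ℝ g (y - x) := by
    rw [← Finset.mul_sum, hg, sum_inner]
  have e2 : ∑ _t ∈ s, ‖y - x‖ ^ 2 = m * ‖y - x‖ ^ 2 := by
    rw [Finset.sum_const, nsmul_eq_mul, hmdef]
  have h2 : ∑ t ∈ s, (pen (c t) (r t) x + 2 * inner ℝ (x - projBall (c t) (r t) x) (y - x) + ‖y - x‖ ^ 2)
      = (∑ t ∈ s, pen (c t) (r t) x) + (2 * inner ℝ g (y - x) + m * ‖y - x‖ ^ 2) := by
    rw [Finset.sum_add_distrib, Finset.sum_add_distrib, e1, e2, add_assoc]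
  have h3 : 2 * (inner ℝ g (y - x) : ℝ) + m * ‖y - x‖ ^ 2 ≤ 0 := by
    rw [hyx, real_inner_smul_right, real_inner_self_eq_norm_sq, norm_smul, mul_pow,
      Real.norm_eq_abs, sq_abs]
    have heq : 2 * (-(1 / (2 * m)) * ‖g‖ ^ 2) + m * ((-(1 / (2 * m))) ^ 2 * ‖g‖ ^ 2)
        = -((3 / (4 * m)) * ‖g‖ ^ 2) := by field_simp; ring
    rw [heq]
    have : 0 ≤ (3 / (4 * m)) * ‖g‖ ^ 2 := by positivity
    linarith
  linarith [h1, h2.le, h2.ge]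

lemma sum_diff_single {ι : Type*} [DecidableEq ι] (s : Finset ι) {i : ι} (hi : i ∈ s)
    (G G' : ι → ℝ) (h : ∀ t ∈ s, t ≠ i → G t = G' t) :
    ∑ t ∈ s, G t = (∑ t ∈ s, G' t) + (G i - G' i) := by
  rw [← Finset.sum_erase_add s G hi, ← Finset.sum_erase_add s G' hi]
  have he : ∑ t ∈ s.erase i, G t = ∑ t ∈ s.erase i, G' t :=
    Finset.sum_congr rfl fun t ht => h t (Finset.mem_of_mem_erase ht) (Finset.ne_of_mem_erase ht)
  rw [he]; ring

lemma objDiff {d n : ℕ} {J : Type*} [Fintype J] (a : J → EuclideanSpace ℝ (Fin d))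
    (A : Fin n → Finset J) (dhat : Fin n → J → ℝ)
    (B : Fin n → Finset (Fin n)) (lhat : Fin n → Fin n → ℝ)
    (hBirr : ∀ i : Fin n, i ∉ B i)
    (hBsymm : ∀ i q : Fin n, q ∈ B i ↔ i ∈ B q)
    (hlsymm : ∀ i q : Fin n, lhat i q = lhat q i)
    (x : Fin n → EuclideanSpace ℝ (Fin d)) (i : Fin n) (z : EuclideanSpace ℝ (Fin d)) :
    obj a A dhat B lhat (Function.update x i z) =
      obj a A dhat B lhat x
        + ((∑ j ∈ A i, pen (a j) (dhat i j) z) - ∑ j ∈ A i, pen (a j) (dhat i j) (x i))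
        + ((∑ q ∈ B i, pen (x q) (lhat i q) z) - ∑ q ∈ B i, pen (x q) (lhat i q) (x i)) := by
  classical
  simp only [obj, pen]
  set y := Function.update x i z with hydef
  have hyi : y i = z := Function.update_self i z x
  have hyt : ∀ t : Fin n, t ≠ i → y t = x t := fun t ht => Function.update_of_ne ht z x
  have hA : ∑ t, ∑ j ∈ A t, max (‖y t - a j‖ - dhat t j) 0 ^ 2
      = (∑ t, ∑ j ∈ A t, max (‖x t - a j‖ - dhat t j) 0 ^ 2)
        + ((∑ j ∈ A i, max (‖z - a j‖ - dhat i j) 0 ^ 2)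
            - ∑ j ∈ A i, max (‖x i - a j‖ - dhat i j) 0 ^ 2) := by
    have := sum_diff_single Finset.univ (Finset.mem_univ i)
      (fun t => ∑ j ∈ A t, max (‖y t - a j‖ - dhat t j) 0 ^ 2)
      (fun t => ∑ j ∈ A t, max (‖x t - a j‖ - dhat t j) 0 ^ 2)
      (fun t _ ht => by simp only [hyt t ht])
    rw [this]
    beta_reduce
    rw [hyi]
  set Δ : Fin n → ℝ := fun t =>
    max (‖x t - z‖ - lhat t i) 0 ^ 2 - max (‖x t - x i‖ - lhat t i) 0 ^ 2 with hΔ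
  have hΔeq : ∑ t ∈ B i, Δ t
      = (∑ q ∈ B i, max (‖z - x q‖ - lhat i q) 0 ^ 2)
        - ∑ q ∈ B i, max (‖x i - x q‖ - lhat i q) 0 ^ 2 := by
    rw [← Finset.sum_sub_distrib]
    refine Finset.sum_congr rfl fun q _ => ?_
    simp only [hΔ]
    rw [norm_sub_rev (x q) z, norm_sub_rev (x q) (x i), hlsymm q i]
  have step1 : ∀ t : Fin n, t ≠ i →
      ∑ q ∈ B t, max (‖y t - y q‖ - lhat t q) 0 ^ 2
      = (∑ q ∈ B t, max (‖x t - x q‖ - lhat t q) 0 ^ 2) + (if t ∈ B i then Δ t else 0) := by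
    intro t ht
    by_cases hiB : i ∈ B t
    · have := sum_diff_single (B t) hiB
        (fun q => max (‖y t - y q‖ - lhat t q) 0 ^ 2)
        (fun q => max (‖x t - x q‖ - lhat t q) 0 ^ 2)
        (fun q _ hq => by simp only [hyt t ht, hyt q hq])
      rw [this, if_pos ((hBsymm t i).mp hiB)]
      beta_reduce
      rw [hyt t ht, hyi]
    · rw [if_neg (fun hmem => hiB ((hBsymm t i).mpr hmem)), add_zero]
      exact Finset.sum_congr rfl fun q hq => by
        rw [hyt t ht, hyt q (fun e => hiB (e ▸ hq))]
  have stepi : ∑ q ∈ B i, max (‖y i - y q‖ - lhat i q) 0 ^ 2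
      = ∑ q ∈ B i, max (‖z - x q‖ - lhat i q) 0 ^ 2 :=
    Finset.sum_congr rfl fun q hq => by
      rw [hyi, hyt q (fun e => hBirr i (e ▸ hq))]
  have hB : ∑ t, ∑ q ∈ B t, max (‖y t - y q‖ - lhat t q) 0 ^ 2
      = (∑ t, ∑ q ∈ B t, max (‖x t - x q‖ - lhat t q) 0 ^ 2)
        + 2 * ((∑ q ∈ B i, max (‖z - x q‖ - lhat i q) 0 ^ 2)
            - ∑ q ∈ B i, max (‖x i - x q‖ - lhat i q) 0 ^ 2) := by
    have houter := sum_diff_single Finset.univ (Finset.mem_univ i)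
      (fun t => ∑ q ∈ B t, max (‖y t - y q‖ - lhat t q) 0 ^ 2)
      (fun t => (∑ q ∈ B t, max (‖x t - x q‖ - lhat t q) 0 ^ 2) + (if t ∈ B i then Δ t else 0))
      (fun t _ ht => step1 t ht)
    rw [houter]
    beta_reduce
    rw [Finset.sum_add_distrib, Finset.sum_ite_mem, Finset.univ_inter, hΔeq,
      stepi, if_neg (hBirr i), add_zero]
    ring
  rw [hA, hB]
  ring

theorem stmt6 (d n : ℕ) (hd : 1 ≤ d) (hn : 1 ≤ n) {J : Type*} [Fintype J]
    (a : J → EuclideanSpace ℝ (Fin d))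
    (A : Fin n → Finset J) (dhat : Fin n → J → ℝ)
    (B : Fin n → Finset (Fin n)) (lhat : Fin n → Fin n → ℝ)
    (hdhat : ∀ i, ∀ j ∈ A i, 0 ≤ dhat i j)
    (hlhat : ∀ i, ∀ q ∈ B i, 0 ≤ lhat i q)
    (hBirr : ∀ i : Fin n, i ∉ B i)
    (hBsymm : ∀ i q : Fin n, q ∈ B i ↔ i ∈ B q)
    (hlsymm : ∀ i q : Fin n, lhat i q = lhat q i)
    (hcard : ∀ i : Fin n, 1 ≤ (A i).card + (B i).card)
    (X : ℕ → Fin n → EuclideanSpace ℝ (Fin d))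
    (hX : IsPPM a A dhat B lhat X) :
    (∀ k : ℕ, obj a A dhat B lhat (X (k + 1)) ≤ obj a A dhat B lhat (X k)) ∧
    (∀ (k : ℕ) (i : Fin n),
      obj a A dhat B lhat (interm X k ((i : ℕ) + 1)) ≤ obj a A dhat B lhat (interm X k (i : ℕ))) := by
  classical
  have key : ∀ (k : ℕ) (i : Fin n),
      obj a A dhat B lhat (interm X k ((i : ℕ) + 1)) ≤ obj a A dhat B lhat (interm X k (i : ℕ)) := by
    intro k i
    set x : Fin n → EuclideanSpace ℝ (Fin d) := interm X k (i : ℕ) with hxdef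
    have hxi : x i = X k i := by simp [hxdef, interm]
    have hxq : ∀ q : Fin n, (if q < i then X (k+1) q else X k q) = x q := by
      intro q
      simp only [hxdef, interm, Fin.lt_def]
    have hupd : interm X k ((i : ℕ) + 1) = Function.update x i (X (k+1) i) := by
      funext t
      rcases eq_or_ne t i with rfl | h
      · simp [interm]
      · have hv : (t : ℕ) ≠ (i : ℕ) := fun e => h (Fin.ext e)
        rw [Function.update_of_ne h]
        simp only [hxdef, interm]
        by_cases hlt : (t : ℕ) < (i : ℕ)
        · rw [if_pos (by omega), if_pos hlt]
        · rw [if_neg (by omega), if_neg hlt]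
    have hcore : (∑ j ∈ A i, pen (a j) (dhat i j) (X (k+1) i))
        + ∑ q ∈ B i, pen (x q) (lhat i q) (X (k+1) i)
        ≤ (∑ j ∈ A i, pen (a j) (dhat i j) (X k i))
        + ∑ q ∈ B i, pen (x q) (lhat i q) (X k i) := by
      have hs : ((A i).disjSum (B i)).Nonempty := by
        rw [← Finset.card_pos, Finset.card_disjSum]
        have := hcard i; omega
      have hr : ∀ t ∈ (A i).disjSum (B i), 0 ≤ Sum.elim (dhat i) (lhat i) t := by
        intro t ht
        rcases t with j | q
        · exact hdhat i j (Finset.inl_mem_disjSum.mp ht)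
        · exact hlhat i q (Finset.inr_mem_disjSum.mp ht)
      have hX' : X (k+1) i = (1/2 : ℝ) • X k i
          + (1/(2 * (((A i).card : ℝ) + ((B i).card : ℝ)))) •
            ((∑ j ∈ A i, projBall (a j) (dhat i j) (X k i))
              + ∑ q ∈ B i, projBall (x q) (lhat i q) (X k i)) := by
        rw [hX k i]
        simp only [hxq]
      have hyeq : X (k+1) i = (1/2 : ℝ) • X k i
          + (1/(2 * ((((A i).disjSum (B i)).card : ℝ)))) •
            ∑ t ∈ (A i).disjSum (B i),
              projBall (Sum.elim a x t) (Sum.elim (dhat i) (lhat i) t) (X k i) := by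
        rw [Finset.sum_disjSum, Finset.card_disjSum, Nat.cast_add]
        simpa using hX'
      have hc := core ((A i).disjSum (B i)) hs (Sum.elim a x) (Sum.elim (dhat i) (lhat i))
        hr (X k i) (X (k+1) i) hyeq
      rw [Finset.sum_disjSum, Finset.sum_disjSum] at hc
      simpa using hc
    rw [hupd, objDiff a A dhat B lhat hBirr hBsymm hlsymm x i (X (k+1) i)]
    rw [hxi]
    linarith [hcore]
  refine ⟨?_, key⟩
  intro k
  have h0 : interm X k 0 = X k := by funext t; simp [interm]
  have hnn : interm X k n = X (k+1) := by
    funext t; simp [interm, t.isLt]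
  have hmono : ∀ m, m ≤ n → obj a A dhat B lhat (interm X k m) ≤ obj a A dhat B lhat (X k) := by
    intro m
    induction m with
    | zero => intro _; rw [h0]
    | succ p ih =>
      intro hpn
      have hp : p < n := hpn
      have hstep := key k ⟨p, hp⟩
      exact le_trans hstep (ih (le_of_lt hp))
  rw [← hnn]
  exact hmono n le_rfl
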